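/- Let h and n be positive integers and let M be an n×n integer matrix with M^h = 1. Let K be a field whose characteristic does not divide h and which contains a primitive h-th root of unity ζ, and let m be an integer. Then the dimension over K of the kernel of (M − ζ^m·id) acting on K^n equals the dimension over ℂ of the kernel of (M − exp(2πim/h)·id) acting on ℂ^n. -/

import Mathlib

open Module Polynomial

section Aux

lemma my_natCast_ne_zero_of_dvd {K : Type*} [Field K] {d h : ℕ} (hd : d ∣ h)
    (hK : (h : K) ≠ 0) : (d : K) ≠ 0 := by
  obtain ⟨e, rfl⟩ := hd
  intro h0
  apply hK
  push_cast
  rw [h0, zero_mul]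

lemma my_rootMult_cyclotomic {K : Type*} [Field K] {h : ℕ} (hh : 0 < h) (hK : (h : K) ≠ 0)
    {l : K} (hpow : l ^ h = 1) :
    rootMultiplicity l (cyclotomic (orderOf l) K) = 1 := by
  set d := orderOf l with hd
  have hdh : d ∣ h := orderOf_dvd_of_pow_eq_one hpow
  have hd0 : 0 < d := by
    rcases Nat.eq_zero_or_pos d with h0 | h0
    · rw [h0] at hdh
      exact absurd (Nat.eq_zero_of_zero_dvd hdh) hh.ne'
    · exact h0
  have hdK : (d : K) ≠ 0 := my_natCast_ne_zero_of_dvd hdh hK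
  have hroot : (cyclotomic d K).IsRoot l := (IsPrimitiveRoot.orderOf l).isRoot_cyclotomic hd0
  obtain ⟨g, hg⟩ := cyclotomic.dvd_X_pow_sub_one d K
  have hsep : (X ^ d - 1 : K[X]).Separable := X_pow_sub_one_separable_iff.mpr hdK
  have hne : (X ^ d - 1 : K[X]) ≠ 0 := by
    have := monic_X_pow_sub_C (1 : K) hd0.ne'
    rw [map_one] at this
    exact this.ne_zero
  refine le_antisymm ?_ ?_
  · have h1 : rootMultiplicity l (X ^ d - 1 : K[X]) ≤ 1 :=
      rootMultiplicity_le_one_of_separable hsep l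
    have h2 : rootMultiplicity l (X ^ d - 1 : K[X]) =
        rootMultiplicity l (cyclotomic d K) + rootMultiplicity l g := by
      rw [hg] at hne ⊢
      exact rootMultiplicity_mul hne
    omega
  · exact (rootMultiplicity_pos (cyclotomic_ne_zero d K)).mpr hroot

lemma my_not_root {h N : ℕ} (hh : 0 < h) (hN : 0 < N) {K : Type*} [Field K] (hK : (h : K) ≠ 0)
    {l : K} (hpow : l ^ h = 1) {p : Polynomial ℤ} (hp0 : p ≠ 0)
    (hdvd : p ∣ (X ^ h - 1) ^ N)
    (hnd : ¬ cyclotomic (orderOf l) ℤ ∣ p) :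
    ¬ (p.map (Int.castRingHom K)).IsRoot l := by
  intro hroot
  set d := orderOf l with hd
  have hdh : d ∣ h := orderOf_dvd_of_pow_eq_one hpow
  have hd0 : 0 < d := by
    rcases Nat.eq_zero_or_pos d with h0 | h0
    · rw [h0] at hdh
      exact absurd (Nat.eq_zero_of_zero_dvd hdh) hh.ne'
    · exact h0
  set g : Polynomial ℤ := ∏ i ∈ h.divisors.erase d, cyclotomic i ℤ with hgdef
  have hsplit : (X ^ h - 1 : Polynomial ℤ) = cyclotomic d ℤ * g := by
    rw [hgdef, ← prod_cyclotomic_eq_X_pow_sub_one hh ℤ]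
    exact (Finset.mul_prod_erase _ _ (Nat.mem_divisors.mpr ⟨hdh, hh.ne'⟩)).symm
  have hpg : p ∣ g ^ N := by
    refine UniqueFactorizationMonoid.dvd_of_dvd_mul_right_of_no_prime_factors (b := cyclotomic d ℤ ^ N) hp0 ?_ ?_
    · intro r hrp hrc hpr
      have hr1 : r ∣ cyclotomic d ℤ := hpr.dvd_of_dvd_pow hrc
      have hassoc := hpr.irreducible.associated_of_dvd (cyclotomic.irreducible hd0) hr1
      exact hnd (hassoc.symm.dvd.trans hrp)
    · rw [← mul_pow, ← hsplit]
      exact hdvd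
  have hrootg : ((g ^ N).map (Int.castRingHom K)).IsRoot l :=
    hroot.dvd (Polynomial.map_dvd _ hpg)
  rw [Polynomial.map_pow] at hrootg
  have hrootg' : (g.map (Int.castRingHom K)).IsRoot l := by
    rw [IsRoot, eval_pow, pow_eq_zero_iff hN.ne'] at hrootg
    exact hrootg
  rw [hgdef, Polynomial.map_prod] at hrootg'
  simp only [map_cyclotomic_int] at hrootg'
  rw [IsRoot, eval_prod, Finset.prod_eq_zero_iff] at hrootg'
  obtain ⟨i, hi, hiz⟩ := hrootg'
  have hi' := Finset.mem_of_mem_erase hi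
  have hineq : i ≠ d := Finset.ne_of_mem_erase hi
  haveI : NeZero (i : K) := ⟨my_natCast_ne_zero_of_dvd (Nat.dvd_of_mem_divisors hi') hK⟩
  have hprim : IsPrimitiveRoot l i := isRoot_cyclotomic_iff.mp hiz
  exact hineq hprim.eq_orderOf

lemma my_rootMult_eq (h : ℕ) (hh : 0 < h) {K L : Type*} [Field K] [Field L]
    (hK : (h : K) ≠ 0) (hL : (h : L) ≠ 0) {lK : K} {lL : L}
    (hpK : lK ^ h = 1) (hpL : lL ^ h = 1) (hord : orderOf lK = orderOf lL)
    {N : ℕ} (hN : 0 < N) :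
    ∀ (D : ℕ) (p : Polynomial ℤ), p.natDegree = D → p.Monic → p ∣ (X ^ h - 1) ^ N →
      rootMultiplicity lK (p.map (Int.castRingHom K)) =
      rootMultiplicity lL (p.map (Int.castRingHom L)) := by
  intro D
  induction D using Nat.strong_induction_on with
  | _ D IH =>
    intro p hdeg hmon hdvd
    have hdh : orderOf lK ∣ h := orderOf_dvd_of_pow_eq_one hpK
    have hd0 : 0 < orderOf lK := by
      rcases Nat.eq_zero_or_pos (orderOf lK) with h0 | h0
      · rw [h0] at hdh
        exact absurd (Nat.eq_zero_of_zero_dvd hdh) hh.ne'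
      · exact h0
    by_cases hcd : cyclotomic (orderOf lK) ℤ ∣ p
    · obtain ⟨q, rfl⟩ := hcd
      have hqmon : q.Monic := (cyclotomic.monic (orderOf lK) ℤ).of_mul_monic_left hmon
      have hqdvd : q ∣ (X ^ h - 1) ^ N := dvd_trans (Dvd.intro_left _ rfl) hdvd
      have hdeglt : q.natDegree < D := by
        rw [← hdeg, (cyclotomic.monic (orderOf lK) ℤ).natDegree_mul hqmon, natDegree_cyclotomic]
        have := Nat.totient_pos.mpr hd0
        omega
      rw [Polynomial.map_mul, Polynomial.map_mul,
        rootMultiplicity_mul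
          (mul_ne_zero (((cyclotomic.monic (orderOf lK) ℤ).map _).ne_zero) ((hqmon.map _).ne_zero)),
        rootMultiplicity_mul
          (mul_ne_zero (((cyclotomic.monic (orderOf lK) ℤ).map _).ne_zero) ((hqmon.map _).ne_zero)),
        map_cyclotomic_int, map_cyclotomic_int,
        my_rootMult_cyclotomic hh hK hpK,
        show cyclotomic (orderOf lK) L = cyclotomic (orderOf lL) L by rw [hord],
        my_rootMult_cyclotomic hh hL hpL,
        IH _ hdeglt q rfl hqmon hqdvd]
    · have h0 : p ≠ 0 := hmon.ne_zero
      have hK' := my_not_root hh hN hK hpK h0 hdvd hcd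
      have hL' := my_not_root hh hN hL hpL h0 hdvd (by rwa [← hord])
      rw [rootMultiplicity_eq_zero_iff.mpr (fun hr => absurd hr hK'),
        rootMultiplicity_eq_zero_iff.mpr (fun hr => absurd hr hL')]

lemma my_eval_charpoly {k : ℕ} {R : Type*} [CommRing R] (A : Matrix (Fin k) (Fin k) R) (μ : R) :
    A.charpoly.eval μ = (μ • (1 : Matrix (Fin k) (Fin k) R) - A).det := by
  rw [Matrix.charpoly, ← coe_evalRingHom, RingHom.map_det]
  congr 1
  refine Matrix.ext fun i j => ?_
  by_cases hij : i = j
  · subst hij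
    simp [RingHom.mapMatrix_apply, Matrix.map_apply, Matrix.charmatrix_apply_eq,
      Matrix.sub_apply, Matrix.smul_apply, Matrix.one_apply_eq, smul_eq_mul, mul_one]
  · simp [RingHom.mapMatrix_apply, Matrix.map_apply, Matrix.charmatrix_apply_ne _ _ _ hij,
      Matrix.sub_apply, Matrix.smul_apply, Matrix.one_apply_ne hij, smul_eq_mul, mul_zero]

lemma my_charpoly_sub {k : ℕ} {R : Type*} [CommRing R] (A : Matrix (Fin k) (Fin k) R) (μ : R) :
    (A - μ • 1).charpoly = A.charpoly.comp (X + C μ) := by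
  rw [comp_eq_aeval, Matrix.charpoly, Matrix.charpoly, ← AlgHom.coe_toRingHom,
    RingHom.map_det]
  congr 1
  refine Matrix.ext fun i j => ?_
  by_cases hij : i = j
  · subst hij
    simp only [RingHom.mapMatrix_apply, Matrix.map_apply, Matrix.charmatrix_apply_eq,
      AlgHom.coe_toRingHom, map_sub, aeval_X, aeval_C, Matrix.sub_apply, Matrix.smul_apply,
      Matrix.one_apply_eq, smul_eq_mul, mul_one, algebraMap_eq]
    ring
  · simp only [RingHom.mapMatrix_apply, Matrix.map_apply,
      Matrix.charmatrix_apply_ne _ _ _ hij, AlgHom.coe_toRingHom, map_neg, aeval_C,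
      Matrix.sub_apply, Matrix.smul_apply, Matrix.one_apply_ne hij, smul_eq_mul, mul_zero,
      sub_zero, algebraMap_eq]

lemma my_mulVecLin_pow {k : ℕ} {R : Type*} [CommRing R] (B : Matrix (Fin k) (Fin k) R) (j : ℕ) :
    (B ^ j).mulVecLin = (B.mulVecLin) ^ j := by
  induction j with
  | zero => simp [Matrix.mulVecLin_one, Module.End.one_eq_id]
  | succ j ih =>
    rw [pow_succ, pow_succ, Matrix.mulVecLin_mul, ih]
    rfl

lemma my_charpoly_mulVecLin {k : ℕ} {F : Type*} [Field F] (B : Matrix (Fin k) (Fin k) F) :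
    LinearMap.charpoly (B.mulVecLin) = B.charpoly := by
  rw [← LinearMap.charpoly_toMatrix B.mulVecLin (Pi.basisFun F (Fin k))]
  congr 1
  rw [LinearMap.toMatrix_eq_toMatrix', ← Matrix.toLin'_apply', LinearMap.toMatrix'_toLin']

lemma my_finrank_ker (kdim h : ℕ) (hh : 0 < h) {F : Type*} [Field F]
    (hF : (h : F) ≠ 0) (A : Matrix (Fin kdim) (Fin kdim) F) (hA : A ^ h = 1) (l : F) :
    finrank F (LinearMap.ker (A - l • 1).mulVecLin) = rootMultiplicity l A.charpoly := by
  have hker : (A - l • 1).mulVecLin = A.mulVecLin - l • 1 := by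
    apply LinearMap.ext
    intro v
    simp [Matrix.mulVecLin_apply, Matrix.sub_mulVec, Matrix.smul_mulVec,
      Matrix.one_mulVec, LinearMap.sub_apply, LinearMap.smul_apply]
  have hss : Module.End.IsSemisimple (R := F) (M := Fin kdim → F) A.mulVecLin := by
    apply Module.End.isSemisimple_of_squarefree_aeval_eq_zero
      (p := (X : F[X]) ^ h - 1)
    · exact (X_pow_sub_one_separable_iff.mpr hF).squarefree
    · rw [map_sub, map_one, map_pow, aeval_X, ← my_mulVecLin_pow, hA,
        Matrix.mulVecLin_one, ← Module.End.one_eq_id, sub_self]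
  have he : LinearMap.ker ((A - l • 1).mulVecLin) =
      Module.End.eigenspace (R := F) (M := Fin kdim → F) A.mulVecLin l := by
    rw [Module.End.eigenspace_def, hker]
  rw [he, ← (Module.End.IsSemisimple.isFinitelySemisimple hss).maxGenEigenspace_eq_eigenspace l]
  have hmax : Module.End.maxGenEigenspace (R := F) (M := Fin kdim → F) A.mulVecLin l =
      Module.End.maxGenEigenspace (R := F) (M := Fin kdim → F) (A - l • 1).mulVecLin 0 := by
    ext x
    simp only [Module.End.mem_maxGenEigenspace, zero_smul, sub_zero, hker]
  rw [hmax, LinearMap.finrank_maxGenEigenspace_zero_eq, my_charpoly_mulVecLin, my_charpoly_sub,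
    ← rootMultiplicity_eq_natTrailingDegree]

lemma my_charpoly_dvd (n h : ℕ) (hh : 0 < h) (M : Matrix (Fin n) (Fin n) ℤ) (hM : M ^ h = 1) :
    M.charpoly ∣ ((X : Polynomial ℤ) ^ h - 1) ^ n := by
  have hmonXh : ((X : Polynomial ℤ) ^ h - 1).Monic := by
    have := monic_X_pow_sub_C (1 : ℤ) hh.ne'
    rwa [map_one] at this
  set A : Matrix (Fin n) (Fin n) ℂ := M.map (Int.castRingHom ℂ) with hAdef
  have hA : A ^ h = 1 := by
    have hre : A = (Int.castRingHom ℂ).mapMatrix M := rfl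
    rw [hre, ← map_pow, hM, map_one]
  have hq : A.charpoly = M.charpoly.map (Int.castRingHom ℂ) := Matrix.charpoly_map M _
  have hroots : ∀ μ ∈ A.charpoly.roots, μ ^ h = 1 := by
    intro μ hμ
    have hroot : A.charpoly.IsRoot μ := isRoot_of_mem_roots hμ
    have hdet : (μ • (1 : Matrix (Fin n) (Fin n) ℂ) - A).det = 0 := by
      rw [← my_eval_charpoly]
      exact hroot
    obtain ⟨v, hv0, hv⟩ := Matrix.exists_mulVec_eq_zero_iff.mpr hdet
    rw [Matrix.sub_mulVec, Matrix.smul_mulVec, Matrix.one_mulVec, sub_eq_zero] at hv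
    have hAv : A.mulVec v = μ • v := hv.symm
    have hpow : ∀ j : ℕ, (A ^ j).mulVec v = μ ^ j • v := by
      intro j
      induction j with
      | zero => simp [Matrix.one_mulVec]
      | succ j ih =>
        rw [pow_succ', pow_succ', ← Matrix.mulVec_mulVec, ih, Matrix.mulVec_smul, hAv,
          smul_smul, mul_comm]
    have hv1 : v = μ ^ h • v := by
      have := hpow h
      rwa [hA, Matrix.one_mulVec] at this
    obtain ⟨i, hvi⟩ := Function.ne_iff.mp hv0
    have : v i = μ ^ h * v i := congrFun hv1 i
    have hmul : (μ ^ h - 1) * v i = 0 := by ring_nf; linear_combination -this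
    rcases mul_eq_zero.mp hmul with hz | hz
    · exact sub_eq_zero.mp hz
    · exact absurd hz hvi
  have hsplits : A.charpoly.Splits := IsAlgClosed.splits _
  have hcard : Multiset.card A.charpoly.roots = n := by
    rw [splits_iff_card_roots.mp hsplits, Matrix.charpoly_natDegree_eq_dim, Fintype.card_fin]
  have hfact := hsplits.eq_prod_roots_of_monic (Matrix.charpoly_monic A)
  have hgen : ∀ s : Multiset ℂ, (∀ μ ∈ s, μ ^ h = 1) →
      (Multiset.map (fun a => X - C a) s).prod ∣ ((X : Polynomial ℂ) ^ h - 1) ^ Multiset.card s := by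
    intro s
    induction s using Multiset.induction_on with
    | empty => simp
    | cons a s ih =>
      intro hmem
      rw [Multiset.map_cons, Multiset.prod_cons, Multiset.card_cons, pow_succ']
      refine mul_dvd_mul ?_ (ih fun μ hμ => hmem μ (Multiset.mem_cons_of_mem hμ))
      rw [dvd_iff_isRoot]
      simp [IsRoot, hmem a (Multiset.mem_cons_self a s)]
  have hdvdC : A.charpoly ∣ ((X : Polynomial ℂ) ^ h - 1) ^ n := by
    have hg := hgen A.charpoly.roots hroots
    rw [hcard, ← hfact] at hg
    exact hg
  have hdvdQ : M.charpoly.map (algebraMap ℤ ℚ) ∣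
      (((X : Polynomial ℤ) ^ h - 1) ^ n).map (algebraMap ℤ ℚ) := by
    rw [← map_dvd_map' (algebraMap ℚ ℂ), Polynomial.map_map, Polynomial.map_map,
      show (algebraMap ℚ ℂ).comp (algebraMap ℤ ℚ) = Int.castRingHom ℂ from Subsingleton.elim _ _,
      ← hq]
    have hXmap : (((X : Polynomial ℤ) ^ h - 1) ^ n).map (Int.castRingHom ℂ) =
        ((X : Polynomial ℂ) ^ h - 1) ^ n := by
      simp [Polynomial.map_pow, Polynomial.map_sub]
    rw [hXmap]
    exact hdvdC
  exact (hmonXh.pow n).dvd_of_fraction_map_dvd_fraction_map (Matrix.charpoly_monic M) hdvdQ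

lemma my_zpow_eq {F : Type*} [Field F] {z : F} {h : ℕ} (hh : 0 < h) (hz : z ^ h = 1) (m : ℤ) :
    z ^ m = z ^ ((m % (h : ℤ)).toNat) := by
  have hu : IsUnit z := by
    apply IsUnit.of_mul_eq_one (z ^ (h - 1))
    rw [← pow_succ']
    rwa [Nat.sub_add_cancel hh]
  obtain ⟨u, rfl⟩ := hu
  have hu1 : u ^ h = 1 := by
    ext
    rw [Units.val_pow_eq_pow_val]
    simpa using hz
  have hnn : 0 ≤ m % (h : ℤ) := Int.emod_nonneg m (by exact_mod_cast hh.ne')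
  rw [← Units.val_zpow_eq_zpow_val, ← Units.val_pow_eq_pow_val]
  congr 1
  conv_lhs => rw [show m = (h : ℤ) * (m / (h : ℤ)) + m % (h : ℤ) from (Int.mul_ediv_add_emod m _).symm]
  rw [zpow_add, zpow_mul, zpow_natCast, hu1, one_zpow, one_mul,
    ← zpow_natCast u (m % (h : ℤ)).toNat, Int.toNat_of_nonneg hnn]

end Aux

set_option maxHeartbeats 1000000 in
/-- Let `h` and `n` be positive integers and `M` an `n × n` integer
matrix with `M ^ h = 1`.  Let `K` be a field whose characteristic does not divide `h`,
containing a primitive `h`-th root of unity `ζ`, and let `m` be an integer.  Then the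
`K`-dimension of the kernel of `M - ζ^m·id` acting on `K^n` equals the `ℂ`-dimension of
the kernel of `M - exp(2πim/h)·id` acting on `ℂ^n`. -/
theorem finrank_ker_eq_of_primitiveRoot
    (h n : ℕ) (hpos : 0 < h) (npos : 0 < n)
    (M : Matrix (Fin n) (Fin n) ℤ) (hM : M ^ h = 1)
    (K : Type*) [Field K] (hchar : ¬ (ringChar K ∣ h))
    (ζ : K) (hζ : IsPrimitiveRoot ζ h) (m : ℤ) :
    finrank K (LinearMap.ker
        ((M.map (Int.cast : ℤ → K) - ζ ^ m • (1 : Matrix (Fin n) (Fin n) K)).mulVecLin)) =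
    finrank ℂ (LinearMap.ker
        ((M.map (Int.cast : ℤ → ℂ) -
          Complex.exp (2 * Real.pi * Complex.I * m / h) • (1 : Matrix (Fin n) (Fin n) ℂ)).mulVecLin)) := by
  have hKne : (h : K) ≠ 0 := fun h0 => hchar ((ringChar.spec K h).mp h0)
  have hCne : (h : ℂ) ≠ 0 := Nat.cast_ne_zero.mpr hpos.ne'
  set ξ : ℂ := Complex.exp (2 * Real.pi * Complex.I / h) with hξdef
  have hξ : IsPrimitiveRoot ξ h := Complex.isPrimitiveRoot_exp h hpos.ne'
  have hζh : ζ ^ h = 1 := hζ.pow_eq_one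
  have hξh : ξ ^ h = 1 := hξ.pow_eq_one
  set k : ℕ := (m % (h : ℤ)).toNat with hk
  -- identify the complex scalar with ξ ^ m
  have hexp : Complex.exp (2 * Real.pi * Complex.I * m / h) = ξ ^ m := by
    rw [hξdef, ← Complex.exp_int_mul]
    congr 1
    field_simp
  have hζm : ζ ^ m = ζ ^ k := my_zpow_eq hpos hζh m
  have hξm : ξ ^ m = ξ ^ k := my_zpow_eq hpos hξh m
  -- powers of h-th roots of unity
  have hζk : (ζ ^ k) ^ h = 1 := by rw [← pow_mul, mul_comm, pow_mul, hζh, one_pow]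
  have hξk : (ξ ^ k) ^ h = 1 := by rw [← pow_mul, mul_comm, pow_mul, hξh, one_pow]
  have hord : orderOf (ζ ^ k) = orderOf (ξ ^ k) := by
    rcases Nat.eq_zero_or_pos k with h0 | h0
    · rw [h0, pow_zero, pow_zero, orderOf_one, orderOf_one]
    · rw [orderOf_pow' _ h0.ne', orderOf_pow' _ h0.ne', ← hζ.eq_orderOf, ← hξ.eq_orderOf]
  -- matrices over the two fields
  have hAK : (M.map (Int.cast : ℤ → K)) ^ h = 1 := by
    have hre : M.map (Int.cast : ℤ → K) = (Int.castRingHom K).mapMatrix M := rfl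
    rw [hre, ← map_pow, hM, map_one]
  have hAC : (M.map (Int.cast : ℤ → ℂ)) ^ h = 1 := by
    have hre : M.map (Int.cast : ℤ → ℂ) = (Int.castRingHom ℂ).mapMatrix M := rfl
    rw [hre, ← map_pow, hM, map_one]
  rw [my_finrank_ker n h hpos hKne _ hAK (ζ ^ m),
    my_finrank_ker n h hpos hCne _ hAC _]
  have hcpK : (M.map (Int.cast : ℤ → K)).charpoly = M.charpoly.map (Int.castRingHom K) := by
    rw [show (Int.cast : ℤ → K) = ⇑(Int.castRingHom K) from rfl]
    exact Matrix.charpoly_map M (Int.castRingHom K)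
  have hcpC : (M.map (Int.cast : ℤ → ℂ)).charpoly = M.charpoly.map (Int.castRingHom ℂ) := by
    rw [show (Int.cast : ℤ → ℂ) = ⇑(Int.castRingHom ℂ) from rfl]
    exact Matrix.charpoly_map M (Int.castRingHom ℂ)
  rw [hcpK, hcpC, hexp, hζm, hξm]
  exact my_rootMult_eq h hpos hKne hCne hζk hξk hord npos M.charpoly.natDegree M.charpoly rfl
    (Matrix.charpoly_monic M) (my_charpoly_dvd n h hpos M hM)
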